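/- If f: X → X is a continuum-wise expansive homeomorphism of a compact metric space that contains a non-degenerate subcontinuum (equivalently, a compact metric space of positive topological dimension, i.e. X is not totally disconnected), then the induced map C(f) on the hyperspace of continua C(X) is not transitive. -/

import Mathlib

open Set Metric Filter Function

/-- The `n`-th iterate over `ℤ` of the invertible system with forward map `g`
and backward map `ginv`. -/
def iterZ {X : Type*} (g ginv : X → X) : ℤ → X → X
  | Int.ofNat n => g^[n]
  | Int.negSucc n => ginv^[n + 1]

/-- Two-sided shadowing property for an invertible system `(g, ginv)`. -/
def ShadowingZ {X : Type*} [MetricSpace X] (g ginv : X → X) : Prop :=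
  ∀ ε > 0, ∃ δ > 0, ∀ x : ℤ → X,
    (∀ n : ℤ, dist (g (x n)) (x (n + 1)) < δ) →
      ∃ y : X, ∀ n : ℤ, dist (iterZ g ginv n y) (x n) < ε

/-- One-sided shadowing property for a map `g`. -/
def ShadowingN {X : Type*} [MetricSpace X] (g : X → X) : Prop :=
  ∀ ε > 0, ∃ δ > 0, ∀ x : ℕ → X,
    (∀ n : ℕ, dist (g (x n)) (x (n + 1)) < δ) →
      ∃ y : X, ∀ n : ℕ, dist (g^[n] y) (x n) < ε

/-- The hyperspace of (nonempty) subcontinua of `X`, with the Hausdorff metric. -/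
abbrev Continua (X : Type*) [MetricSpace X] : Type _ :=
  {A : TopologicalSpace.NonemptyCompacts X // IsConnected (A : Set X)}

/-- The induced map `C(f)` on the hyperspace of continua. -/
def inducedC {X : Type*} [MetricSpace X] (f : X → X) (hf : Continuous f) :
    Continua X → Continua X := fun A =>
  ⟨⟨⟨f '' (A.1 : Set X), A.1.isCompact.image hf⟩, A.1.nonempty.image f⟩,
    A.2.image f hf.continuousOn⟩

/-- The `c`-stable set of `x` for the map `g`. -/
def Ws {X : Type*} [MetricSpace X] (g : X → X) (c : ℝ) (x : X) : Set X :=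
  {y | ∀ k : ℕ, dist (g^[k] y) (g^[k] x) ≤ c}

/-- Topological transitivity. -/
def TransitiveMap {X : Type*} [TopologicalSpace X] (g : X → X) : Prop :=
  ∀ U V : Set X, IsOpen U → IsOpen V → U.Nonempty → V.Nonempty →
    ∃ n : ℕ, ((g^[n] '' U) ∩ V).Nonempty

/-- `A` is a quasi-attractor of `g`. -/
def QuasiAttractor {X : Type*} [TopologicalSpace X] (g : X → X) (A : Set X) : Prop :=
  IsCompact A ∧ g '' A = A ∧
    ∀ U : Set X, IsOpen U → A ⊆ U →
      ∃ V : Set X, IsOpen V ∧ A ⊆ V ∧ V ⊆ U ∧ closure (g '' V) ⊆ V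

/-- `A` is a quasi-attractor of the restriction of `g` to the invariant set `s`. -/
def QuasiAttractorOn {X : Type*} [TopologicalSpace X] (g : X → X) (s A : Set X) : Prop :=
  IsCompact A ∧ A ⊆ s ∧ g '' A = A ∧
    ∀ U : Set X, IsOpen U → A ⊆ U →
      ∃ V : Set X, IsOpen V ∧ A ⊆ V ∧ V ∩ s ⊆ U ∧ closure (g '' (V ∩ s)) ∩ s ⊆ V

/-- Shadowing property for the restriction of the invertible system `(g, ginv)`
to an invariant set `s`. -/
def ShadowingZOn {X : Type*} [MetricSpace X] (g ginv : X → X) (s : Set X) : Prop :=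
  ∀ ε > 0, ∃ δ > 0, ∀ x : ℤ → X, (∀ n : ℤ, x n ∈ s) →
    (∀ n : ℤ, dist (g (x n)) (x (n + 1)) < δ) →
      ∃ y ∈ s, ∀ n : ℤ, dist (iterZ g ginv n y) (x n) < ε

/-- `(X, f)` is a simple dynamical system with quasi-attractor fixed point `p`
and quasi-repeller fixed point `q`. -/
def SimpleSystem {X : Type*} [MetricSpace X] (f : X ≃ₜ X) (p q : X) : Prop :=
  f p = p ∧ f q = q ∧ QuasiAttractor ⇑f {p} ∧ QuasiAttractor ⇑f.symm {q} ∧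
    ∀ x : X, x ≠ p → x ≠ q →
      Tendsto (fun n : ℕ => (⇑f)^[n] x) atTop (nhds p) ∧
      Tendsto (fun n : ℕ => (⇑f.symm)^[n] x) atTop (nhds q)



section AuxStmt4

variable {X : Type*} [MetricSpace X] [CompactSpace X]

private lemma bddX (s : Set X) : Bornology.IsBounded s :=
  isCompact_univ.isBounded.subset (Set.subset_univ s)

private lemma edist_fin (s t : Set X) (hs : s.Nonempty) (ht : t.Nonempty) :
    EMetric.hausdorffEdist s t ≠ ⊤ :=
  Metric.hausdorffEdist_ne_top_of_nonempty_of_bounded hs ht (bddX s) (bddX t)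

private lemma real_le_of_eps {a b : ℝ} (h : ∀ ε : ℝ, 0 < ε → a ≤ b + ε) : a ≤ b := by
  by_contra hlt
  push_neg at hlt
  have := h ((a - b) / 2) (by linarith)
  linarith

private lemma diam_le_hd {s t : Set X} (hs : s.Nonempty) (ht : t.Nonempty) {d : ℝ}
    (h : hausdorffDist s t < d) : Metric.diam s ≤ Metric.diam t + 2 * d := by
  have hd0 : 0 < d := lt_of_le_of_lt hausdorffDist_nonneg h
  have h0 : 0 ≤ Metric.diam t + 2 * d := by
    have := Metric.diam_nonneg (s := t); linarith
  apply Metric.diam_le_of_forall_dist_le h0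
  intro x hx y hy
  obtain ⟨x', hx', hxx'⟩ := exists_dist_lt_of_hausdorffDist_lt hx h (edist_fin s t hs ht)
  obtain ⟨y', hy', hyy'⟩ := exists_dist_lt_of_hausdorffDist_lt hy h (edist_fin s t hs ht)
  have hmid : dist x' y' ≤ Metric.diam t := Metric.dist_le_diam_of_mem (bddX t) hx' hy'
  have t1 := dist_triangle x x' y
  have t2 := dist_triangle x' y' y
  have := dist_comm y y'
  linarith

private lemma small_iter (g : X → X) (hg : Continuous g) {c : ℝ} (hc : 0 < c) (k : ℕ) :
    ∃ δ > 0, ∀ s : Set X, Metric.diam s < δ → ∀ i ≤ k, Metric.diam (g^[i] '' s) ≤ c := by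
  induction k with
  | zero =>
    refine ⟨c, hc, fun s hs i hi => ?_⟩
    obtain rfl : i = 0 := Nat.le_zero.mp hi
    simpa using hs.le
  | succ k ih =>
    obtain ⟨δ, hδ, hsmall⟩ := ih
    have hu : UniformContinuous (g^[k + 1]) :=
      CompactSpace.uniformContinuous_of_continuous (hg.iterate (k + 1))
    obtain ⟨δ', hδ', hmod⟩ := Metric.uniformContinuous_iff.mp hu c hc
    refine ⟨min δ δ', lt_min hδ hδ', fun s hs i hi => ?_⟩
    by_cases hik : i ≤ k
    · exact hsmall s (lt_of_lt_of_le hs (min_le_left _ _)) i hik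
    · obtain rfl : i = k + 1 := le_antisymm hi (not_le.1 hik)
      apply Metric.diam_le_of_forall_dist_le hc.le
      rintro u ⟨x, hx, rfl⟩ v ⟨y, hy, rfl⟩
      have hxy : dist x y < δ' :=
        lt_of_le_of_lt (Metric.dist_le_diam_of_mem (bddX s) hx hy)
          (lt_of_lt_of_le hs (min_le_right _ _))
      exact (hmod hxy).le

private lemma image_hd (g : X → X) (hg : Continuous g) {ε : ℝ} (hε : 0 < ε) :
    ∃ δ > 0, ∀ s t : Set X, s.Nonempty → t.Nonempty → hausdorffDist s t < δ →
      hausdorffDist (g '' s) (g '' t) ≤ ε := by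
  obtain ⟨δ, hδ, hmod⟩ := Metric.uniformContinuous_iff.mp
    (CompactSpace.uniformContinuous_of_continuous hg) ε hε
  refine ⟨δ, hδ, fun s t hs ht hst => ?_⟩
  apply hausdorffDist_le_of_mem_dist hε.le
  · rintro x ⟨x', hx', rfl⟩
    obtain ⟨y', hy', hd⟩ := exists_dist_lt_of_hausdorffDist_lt hx' hst (edist_fin s t hs ht)
    exact ⟨g y', Set.mem_image_of_mem g hy', (hmod hd).le⟩
  · rintro y ⟨y', hy', rfl⟩
    obtain ⟨x', hx', hd⟩ := exists_dist_lt_of_hausdorffDist_lt' hy' hst (edist_fin s t hs ht)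
    refine ⟨g x', Set.mem_image_of_mem g hx', ?_⟩
    rw [dist_comm]
    exact (hmod hd).le

private lemma limit_preconnected {L : ℕ → Set X} (hne : ∀ j, (L j).Nonempty)
    (hconn : ∀ j, IsPreconnected (L j)) {T : Set X} (hT : IsCompact T) (hTne : T.Nonempty)
    (hconv : ∀ ε > 0, ∃ j, hausdorffDist (L j) T < ε) : IsPreconnected T := by
  intro u v hu hv hcover hTu hTv
  by_contra hE
  rw [Set.not_nonempty_iff_eq_empty] at hE
  have hAc : IsCompact (T \ v) := hT.diff hv
  have hBc : IsCompact (T \ u) := hT.diff hu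
  have hAne : (T \ v).Nonempty := by
    obtain ⟨x, hxT, hxu⟩ := hTu
    exact ⟨x, hxT, fun hxv => (Set.eq_empty_iff_forall_notMem.mp hE x ⟨hxT, hxu, hxv⟩)⟩
  have hdisj : Disjoint (T \ v) (T \ u) := by
    rw [Set.disjoint_left]
    rintro x ⟨hxT, hxv⟩ ⟨-, hxu⟩
    rcases hcover hxT with h | h
    exacts [hxu h, hxv h]
  obtain ⟨δ, hδ, hth⟩ := hdisj.exists_thickenings hAc hBc.isClosed
  obtain ⟨j, hj⟩ := hconv δ hδ
  have hLsub : L j ⊆ Metric.thickening δ (T \ v) ∪ Metric.thickening δ (T \ u) := by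
    intro x hx
    obtain ⟨y, hy, hxy⟩ := exists_dist_lt_of_hausdorffDist_lt hx hj (edist_fin _ _ (hne j) hTne)
    by_cases hyv : y ∈ v
    · have hyu : y ∉ u := fun hyu => Set.eq_empty_iff_forall_notMem.mp hE y ⟨hy, hyu, hyv⟩
      exact Or.inr (Metric.mem_thickening_iff.mpr ⟨y, ⟨hy, hyu⟩, hxy⟩)
    · exact Or.inl (Metric.mem_thickening_iff.mpr ⟨y, ⟨hy, hyv⟩, hxy⟩)
  have hLA : (L j ∩ Metric.thickening δ (T \ v)).Nonempty := by
    obtain ⟨a, haT, hav⟩ := hAne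
    obtain ⟨x, hx, hax⟩ := exists_dist_lt_of_hausdorffDist_lt' haT hj (edist_fin _ _ (hne j) hTne)
    exact ⟨x, hx, Metric.mem_thickening_iff.mpr ⟨a, ⟨haT, hav⟩, hax⟩⟩
  have hBne : (T \ u).Nonempty := by
    obtain ⟨x, hxT, hxv⟩ := hTv
    exact ⟨x, hxT, fun hxu => (Set.eq_empty_iff_forall_notMem.mp hE x ⟨hxT, hxu, hxv⟩)⟩
  have hLB : (L j ∩ Metric.thickening δ (T \ u)).Nonempty := by
    obtain ⟨b, hbT, hbu⟩ := hBne
    obtain ⟨x, hx, hbx⟩ := exists_dist_lt_of_hausdorffDist_lt' hbT hj (edist_fin _ _ (hne j) hTne)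
    exact ⟨x, hx, Metric.mem_thickening_iff.mpr ⟨b, ⟨hbT, hbu⟩, hbx⟩⟩
  obtain ⟨x, -, hx1, hx2⟩ := hconn j _ _ Metric.isOpen_thickening Metric.isOpen_thickening
    hLsub hLA hLB
  exact Set.disjoint_left.mp hth hx1 hx2

private lemma exists_dist_gt {s : Set X} {c : ℝ} (hc : 0 ≤ c) (h : c < Metric.diam s) :
    ∃ x ∈ s, ∃ y ∈ s, c < dist x y := by
  by_contra hcon
  push_neg at hcon
  exact absurd (Metric.diam_le_of_forall_dist_le hc fun x hx y hy => hcon x hx y hy)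
    (not_le.mpr h)

end AuxStmt4
section AuxStmt4b

variable {X : Type*} [MetricSpace X] [CompactSpace X]

private lemma bump {D G₀ V₀ : Set X} (hD : IsCompact D) (hDconn : IsPreconnected D)
    (hG : IsClosed G₀) (hV : IsOpen V₀) (hVG : V₀ ⊆ G₀) {x z : X} (hx : x ∈ D) (hxG : x ∈ G₀)
    (hz : z ∈ D) (hzG : z ∉ G₀) :
    ∃ K : Set X, IsCompact K ∧ IsPreconnected K ∧ x ∈ K ∧ K ⊆ D ∧ K ⊆ G₀ ∧
      ∃ w ∈ K, w ∉ V₀ := by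
  haveI hcs : CompactSpace D := isCompact_iff_compactSpace.mp hD
  haveI : ConnectedSpace D := Subtype.connectedSpace ⟨⟨x, hx⟩, hDconn⟩
  set GY : Set D := Subtype.val ⁻¹' G₀ with hGYdef
  have hGYc : IsClosed GY := hG.preimage continuous_subtype_val
  haveI : CompactSpace GY := isCompact_iff_compactSpace.mp hGYc.isCompact
  have hxGY : (⟨x, hx⟩ : D) ∈ GY := hxG
  set xt : GY := ⟨⟨x, hx⟩, hxGY⟩ with hxtdef
  set K₀ : Set GY := connectedComponent xt with hK₀def
  have hK₀comp : IsCompact K₀ := isClosed_connectedComponent.isCompact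
  refine ⟨Subtype.val '' (Subtype.val '' K₀),
    (hK₀comp.image continuous_subtype_val).image continuous_subtype_val,
    ((isPreconnected_connectedComponent.image _ continuous_subtype_val.continuousOn).image _
      continuous_subtype_val.continuousOn),
    ⟨⟨x, hx⟩, ⟨xt, mem_connectedComponent, rfl⟩, rfl⟩, ?_, ?_, ?_⟩
  · rintro - ⟨y, -, rfl⟩
    exact y.2
  · rintro - ⟨-, ⟨y', -, rfl⟩, rfl⟩
    exact y'.2
  · by_contra hcon
    push_neg at hcon
    set VY : Set GY := (fun y : GY => ((y : D) : X)) ⁻¹' V₀ with hVYdef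
    have hVYo : IsOpen VY :=
      hV.preimage (continuous_subtype_val.comp continuous_subtype_val)
    have hK₀V : K₀ ⊆ VY := by
      intro y hy
      exact hcon ((y : D) : X) ⟨(y : D), ⟨y, hy, rfl⟩, rfl⟩
    have his := connectedComponent_eq_iInter_isClopen xt
    have hcVY : IsCompact VYᶜ := hVYo.isClosed_compl.isCompact
    have hempty : VYᶜ ∩ ⋂ (Z : { Z : Set GY // IsClopen Z ∧ xt ∈ Z }), (Z : Set GY) = ∅ := by
      rw [← his, Set.eq_empty_iff_forall_notMem]
      rintro y ⟨hyc, hyK⟩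
      exact hyc (hK₀V hyK)
    obtain ⟨b, hb⟩ := hcVY.elim_finite_subfamily_closed _ (fun Z => Z.2.1.1) hempty
    set W : Set GY := ⋂ Z ∈ b, (Z : Set GY) with hWdef
    have hWclopen : IsClopen W := isClopen_biInter_finset fun Z _ => Z.2.1
    have hxW : xt ∈ W := Set.mem_iInter₂.mpr fun Z _ => Z.2.2
    have hWV : W ⊆ VY := by
      intro y hy
      by_contra hyV
      exact Set.eq_empty_iff_forall_notMem.mp hb y ⟨hyV, hy⟩
    obtain ⟨O, hOopen, hOW⟩ := isOpen_induced_iff.mp hWclopen.2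
    obtain ⟨C, hCclosed, hCW⟩ := isClosed_induced_iff.mp hWclopen.1
    set VD : Set D := Subtype.val ⁻¹' V₀ with hVDdef
    have hVDopen : IsOpen VD := hV.preimage continuous_subtype_val
    have himgO : Subtype.val '' W = O ∩ GY := by
      rw [← hOW, Subtype.image_preimage_coe, Set.inter_comm]
    have himgC : Subtype.val '' W = C ∩ GY := by
      rw [← hCW, Subtype.image_preimage_coe, Set.inter_comm]
    have hWamb_sub_VD : Subtype.val '' W ⊆ VD := by
      rintro - ⟨y, hy, rfl⟩
      exact hWV hy
    have hVD_sub_GY : VD ⊆ GY := fun y hy => hVG hy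
    have hWamb_eq : Subtype.val '' W = O ∩ VD := by
      apply Set.Subset.antisymm
      · intro y hy
        exact ⟨(himgO ▸ hy).1, hWamb_sub_VD hy⟩
      · intro y hy
        rw [himgO]
        exact ⟨hy.1, hVD_sub_GY hy.2⟩
    have hclopen : IsClopen (Subtype.val '' W : Set D) := by
      constructor
      · rw [himgC]
        exact hCclosed.inter hGYc
      · rw [hWamb_eq]
        exact hOopen.inter hVDopen
    rcases isClopen_iff.mp hclopen with hWe | hWu
    · have : (⟨x, hx⟩ : D) ∈ Subtype.val '' W := ⟨xt, hxW, rfl⟩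
      rw [hWe] at this
      exact this
    · have : (⟨z, hz⟩ : D) ∈ Subtype.val '' W := by rw [hWu]; trivial
      rw [himgO] at this
      exact hzG this.2

end AuxStmt4b
section AuxStmt4c

variable {X : Type*} [MetricSpace X] [CompactSpace X]

private def mkC (s : Set X) (h1 : IsCompact s) (h2 : IsConnected s) : Continua X :=
  ⟨⟨⟨s, h1⟩, h2.nonempty⟩, h2⟩

private lemma mkC_val (s : Set X) (h1 : IsCompact s) (h2 : IsConnected s) :
    ((mkC s h1 h2).1 : Set X) = s := rfl

private lemma inducedC_val (g : X → X) (hg : Continuous g) (A : Continua X) :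
    (((inducedC g hg A).1 : Set X)) = g '' ((A.1 : Set X)) := rfl

private lemma inducedC_iter_val (g : X → X) (hg : Continuous g) (n : ℕ) (A : Continua X) :
    ((((inducedC g hg)^[n] A).1 : Set X)) = g^[n] '' ((A.1 : Set X)) := by
  induction n with
  | zero => simp
  | succ n ih =>
    rw [Function.iterate_succ_apply', inducedC_val, ih, ← Set.image_comp,
      ← Function.iterate_succ']

private lemma inducedC_left_inv {f : X ≃ₜ X} (A : Continua X) :
    inducedC ⇑f.symm f.symm.continuous (inducedC ⇑f f.continuous A) = A := by
  apply Subtype.ext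
  apply TopologicalSpace.NonemptyCompacts.ext
  show ⇑f.symm '' (⇑f '' ((A.1 : Set X))) = ((A.1 : Set X))
  exact f.symm_image_image _

private lemma inducedC_right_inv {f : X ≃ₜ X} (A : Continua X) :
    inducedC ⇑f f.continuous (inducedC ⇑f.symm f.symm.continuous A) = A := by
  apply Subtype.ext
  apply TopologicalSpace.NonemptyCompacts.ext
  show ⇑f '' (⇑f.symm '' ((A.1 : Set X))) = ((A.1 : Set X))
  exact f.image_symm_image _

private def NCmap (g : X → X) (hg : Continuous g) (B : TopologicalSpace.NonemptyCompacts X) :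
    TopologicalSpace.NonemptyCompacts X :=
  ⟨⟨g '' (B : Set X), B.isCompact.image hg⟩, B.nonempty.image g⟩

private lemma NCmap_cont (g : X → X) (hg : Continuous g) : Continuous (NCmap g hg) := by
  rw [Metric.continuous_iff]
  intro B ε hε
  obtain ⟨δ, hδ, hmod⟩ := image_hd g hg (half_pos hε)
  refine ⟨δ, hδ, fun A hAB => ?_⟩
  have h1 : hausdorffDist (A : Set X) (B : Set X) < δ := hAB
  have h2 : hausdorffDist (g '' (A : Set X)) (g '' (B : Set X)) ≤ ε / 2 :=
    hmod _ _ A.nonempty B.nonempty h1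
  show hausdorffDist (g '' (A : Set X)) (g '' (B : Set X)) < ε
  linarith

private lemma inducedC_cont (g : X → X) (hg : Continuous g) :
    Continuous (inducedC g hg : Continua X → Continua X) :=
  Continuous.subtype_mk ((NCmap_cont g hg).comp continuous_subtype_val) _

private lemma cont_diamC : Continuous (fun A : Continua X => Metric.diam ((A.1 : Set X))) := by
  have h : Continuous (fun B : TopologicalSpace.NonemptyCompacts X => Metric.diam (B : Set X)) := by
    rw [Metric.continuous_iff]
    intro B ε hε
    refine ⟨ε / 5, by positivity, fun A hAB => ?_⟩
    have h1 : hausdorffDist (A : Set X) (B : Set X) < ε / 5 := hAB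
    have h2 : hausdorffDist (B : Set X) (A : Set X) < ε / 5 := by
      rwa [hausdorffDist_comm] at h1
    have d1 := diam_le_hd A.nonempty B.nonempty h1
    have d2 := diam_le_hd B.nonempty A.nonempty h2
    rw [Real.dist_eq, abs_lt]
    constructor <;> linarith
  exact h.comp continuous_subtype_val

private lemma inducedC_image_open (f : X ≃ₜ X) {U : Set (Continua X)} (hU : IsOpen U) (n : ℕ) :
    IsOpen ((inducedC ⇑f f.continuous)^[n] '' U) := by
  have hLI : Function.LeftInverse (inducedC ⇑f.symm f.symm.continuous)
      (inducedC ⇑f f.continuous) := fun A => inducedC_left_inv A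
  have hRI : Function.LeftInverse (inducedC ⇑f f.continuous)
      (inducedC ⇑f.symm f.symm.continuous) := fun A => inducedC_right_inv A
  have heq : (inducedC ⇑f f.continuous)^[n] '' U
      = ((inducedC ⇑f.symm f.symm.continuous)^[n]) ⁻¹' U := by
    ext A
    constructor
    · rintro ⟨B, hB, rfl⟩
      show (inducedC ⇑f.symm f.symm.continuous)^[n] ((inducedC ⇑f f.continuous)^[n] B) ∈ U
      rwa [hLI.iterate n B]
    · intro hA
      exact ⟨_, hA, hRI.iterate n A⟩
  rw [heq]
  exact hU.preimage ((inducedC_cont _ _).iterate n)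

end AuxStmt4c
section AuxStmt4d

variable {X : Type*} [MetricSpace X] [CompactSpace X]

private lemma limit_diam_le {L : ℕ → Set X} {T : Set X}
    (hLne : ∀ i, (L i).Nonempty) (hTne : T.Nonempty)
    (g : X → X) (hg : Continuous g) {c : ℝ}
    (hconv : ∀ ε > 0, ∃ N : ℕ, ∀ i ≥ N, hausdorffDist (L i) T < ε)
    {j₀ : ℕ} (hbound : ∀ i, j₀ ≤ i → Metric.diam (g '' L i) ≤ c) :
    Metric.diam (g '' T) ≤ c := by
  apply real_le_of_eps
  intro ε hε
  obtain ⟨δ2, hδ2, hmod⟩ := image_hd g hg (show (0:ℝ) < ε/4 by linarith)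
  obtain ⟨N, hN⟩ := hconv δ2 hδ2
  have h1 : hausdorffDist (L (max N j₀)) T < δ2 := hN _ (le_max_left N j₀)
  have h2 := hmod _ _ (hLne (max N j₀)) hTne h1
  have h2' : hausdorffDist (g '' T) (g '' L (max N j₀)) < ε/2 := by
    rw [hausdorffDist_comm]; linarith
  have h3 := diam_le_hd (hTne.image g) ((hLne (max N j₀)).image g) h2'
  have h4 := hbound _ (le_max_right N j₀)
  linarith

end AuxStmt4d
/-- If `f` is a cw-expansive homeomorphism of a compact metric space containing a
non-degenerate subcontinuum, then the induced map `C(f)` on the hyperspace of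
continua is not transitive. -/
theorem stmt4 {X : Type*} [MetricSpace X] [CompactSpace X] (f : X ≃ₜ X)
    (hcw : ∃ c > 0, ∀ x : X, IsTotallyDisconnected (Ws ⇑f c x ∩ Ws ⇑f.symm c x))
    (hA : ∃ A : Set X, IsCompact A ∧ IsConnected A ∧ A.Nontrivial) :
    ¬ TransitiveMap (inducedC ⇑f f.continuous) := by
  obtain ⟨c, hc, hcw⟩ := hcw
  intro hT
  classical
  obtain ⟨A₀, hA₀c, hA₀conn, hA₀nt⟩ := hA
  obtain ⟨a₀, ha₀, b₀, hb₀, hab₀⟩ := hA₀nt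
  -- there exists a continuum of diameter `> c`
  have hVne : ∃ A : Continua X, c < Metric.diam ((A.1 : Set X)) := by
    by_contra hcon
    push_neg at hcon
    have hsub : A₀ ⊆ Ws ⇑f c a₀ ∩ Ws ⇑f.symm c a₀ := by
      intro y hy
      constructor
      · intro k
        have h1 := hcon (mkC ((⇑f)^[k] '' A₀) (hA₀c.image (f.continuous.iterate k))
          (hA₀conn.image _ (f.continuous.iterate k).continuousOn))
        rw [mkC_val] at h1
        exact le_trans (Metric.dist_le_diam_of_mem (bddX _)
          (Set.mem_image_of_mem _ hy) (Set.mem_image_of_mem _ ha₀)) h1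
      · intro k
        have h1 := hcon (mkC ((⇑f.symm)^[k] '' A₀) (hA₀c.image (f.symm.continuous.iterate k))
          (hA₀conn.image _ (f.symm.continuous.iterate k).continuousOn))
        rw [mkC_val] at h1
        exact le_trans (Metric.dist_le_diam_of_mem (bddX _)
          (Set.mem_image_of_mem _ hy) (Set.mem_image_of_mem _ ha₀)) h1
    exact hab₀ (hcw a₀ A₀ hsub hA₀conn.isPreconnected ha₀ hb₀)
  set Vbig : Set (Continua X) := {A : Continua X | c < Metric.diam ((A.1 : Set X))}
    with hVbigdef
  have hVbigOpen : IsOpen Vbig := isOpen_lt continuous_const cont_diamC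
  have hVbigNe : Vbig.Nonempty := hVne
  set U : ℕ → Set (Continua X) :=
    fun j => {A : Continua X | Metric.diam ((A.1 : Set X)) < 1 / (j + 1)} with hUdef
  have hUopen : ∀ j, IsOpen (U j) := fun j => isOpen_lt cont_diamC continuous_const
  have hUne : ∀ j, (U j).Nonempty := by
    intro j
    refine ⟨mkC {a₀} isCompact_singleton isConnected_singleton, ?_⟩
    show Metric.diam (((mkC {a₀} isCompact_singleton isConnected_singleton).1 : Set X))
      < 1 / (j + 1)
    rw [mkC_val, Metric.diam_singleton]
    positivity
  -- transitivity gives continua that are small, become large, and become small again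
  have key : ∀ j : ℕ, ∃ (D : Continua X) (n M : ℕ), n ≤ M ∧
      Metric.diam ((D.1 : Set X)) < 1 / (j + 1) ∧
      c < Metric.diam ((⇑f)^[n] '' (D.1 : Set X)) ∧
      Metric.diam ((⇑f)^[M] '' (D.1 : Set X)) < 1 / (j + 1) := by
    intro j
    obtain ⟨n, E, ⟨B, hBU, hBE⟩, hEV⟩ := hT (U j) Vbig (hUopen j) hVbigOpen (hUne j) hVbigNe
    set P : Set (Continua X) := U j ∩ (inducedC ⇑f f.continuous)^[n] ⁻¹' Vbig with hPdef
    have hPopen : IsOpen P :=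
      (hUopen j).inter (hVbigOpen.preimage ((inducedC_cont _ _).iterate n))
    have hPne : P.Nonempty := ⟨B, hBU, by rw [Set.mem_preimage, hBE]; exact hEV⟩
    obtain ⟨m, E', ⟨E₂, ⟨D₁, hDP, hDE₂⟩, hE₂E'⟩, hE'U⟩ :=
      hT _ (U j) (inducedC_image_open f hPopen n) (hUopen j) (hPne.image _) (hUne j)
    refine ⟨D₁, n, m + n, Nat.le_add_left n m, hDP.1, ?_, ?_⟩
    · have h2 : c < Metric.diam ((((inducedC ⇑f f.continuous)^[n] D₁).1 : Set X)) := hDP.2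
      rwa [inducedC_iter_val] at h2
    · have h3 : (inducedC ⇑f f.continuous)^[m + n] D₁ ∈ U j := by
        rw [Function.iterate_add_apply, hDE₂, hE₂E']
        exact hE'U
      have h4 : Metric.diam ((((inducedC ⇑f f.continuous)^[m + n] D₁).1 : Set X))
        < 1 / (j + 1) := h3
      rwa [inducedC_iter_val] at h4
  choose Dj nn MM hnM hDsmall hDbig hDend using key
  -- two points far apart at time `nn j`
  have hxz : ∀ j, ∃ x ∈ ((Dj j).1 : Set X), ∃ z ∈ ((Dj j).1 : Set X),
      c < dist ((⇑f)^[nn j] x) ((⇑f)^[nn j] z) := by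
    intro j
    obtain ⟨u, hu, v, hv, huv⟩ := exists_dist_gt hc.le (hDbig j)
    obtain ⟨x, hx, rfl⟩ := hu
    obtain ⟨z, hz, rfl⟩ := hv
    exact ⟨x, hx, z, hz, huv⟩
  choose xx hxxD zz hzzD hdist using hxz
  -- boundary bumping: subcontinua with controlled diameters in the whole window
  have hbump : ∀ j, ∃ K : Set X, IsCompact K ∧ IsPreconnected K ∧ xx j ∈ K ∧
      K ⊆ ((Dj j).1 : Set X) ∧
      (∀ y ∈ K, ∀ t, t ≤ MM j → dist ((⇑f)^[t] y) ((⇑f)^[t] (xx j)) ≤ c / 2) ∧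
      ∃ w ∈ K, ∃ t, t ≤ MM j ∧ c / 2 ≤ dist ((⇑f)^[t] w) ((⇑f)^[t] (xx j)) := by
    intro j
    set G₀ : Set X := ⋂ t ∈ Finset.range (MM j + 1),
      {y : X | dist ((⇑f)^[t] y) ((⇑f)^[t] (xx j)) ≤ c / 2} with hG₀def
    set V₀ : Set X := ⋂ t ∈ Finset.range (MM j + 1),
      {y : X | dist ((⇑f)^[t] y) ((⇑f)^[t] (xx j)) < c / 2} with hV₀def
    have hG₀c : IsClosed G₀ := isClosed_biInter fun t _ =>
      isClosed_le (Continuous.dist (f.continuous.iterate t) continuous_const) continuous_const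
    have hV₀o : IsOpen V₀ := isOpen_biInter_finset fun t _ =>
      isOpen_lt (Continuous.dist (f.continuous.iterate t) continuous_const) continuous_const
    have hVG : V₀ ⊆ G₀ := by
      intro y hy
      rw [hV₀def, Set.mem_iInter₂] at hy
      rw [hG₀def, Set.mem_iInter₂]
      simp only [Set.mem_setOf_eq] at hy ⊢
      exact fun t ht => (hy t ht).le
    have hxG : xx j ∈ G₀ := by
      rw [hG₀def, Set.mem_iInter₂]
      intro t ht
      simp only [Set.mem_setOf_eq, dist_self]
      linarith
    have hzG : zz j ∉ G₀ := by
      rw [hG₀def, Set.mem_iInter₂]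
      push_neg
      refine ⟨nn j, Finset.mem_range.mpr (Nat.lt_succ_of_le (hnM j)), ?_⟩
      simp only [Set.mem_setOf_eq, not_le]
      rw [dist_comm]
      linarith [hdist j]
    obtain ⟨K, hK1, hK2, hK3, hK4, hK5, w, hw, hwV⟩ :=
      bump ((Dj j).1.isCompact) ((Dj j).2.isPreconnected) hG₀c hV₀o hVG (hxxD j) hxG
        (hzzD j) hzG
    refine ⟨K, hK1, hK2, hK3, hK4, ?_, w, hw, ?_⟩
    · intro y hy t ht
      have h6 := hK5 hy
      rw [hG₀def, Set.mem_iInter₂] at h6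
      exact h6 t (Finset.mem_range.mpr (Nat.lt_succ_of_le ht))
    · rw [hV₀def, Set.mem_iInter₂] at hwV
      push_neg at hwV
      obtain ⟨t, ht, htd⟩ := hwV
      exact ⟨t, Nat.lt_succ_iff.mp (Finset.mem_range.mp ht), not_lt.mp htd⟩
  choose K hKcomp hKconn hxK hKD hKG ww hwK tt httM httd using hbump
  -- path: a window bound on diameters of iterates of `K j`
  have hKdiam : ∀ j, ∀ s, s ≤ MM j → Metric.diam ((⇑f)^[s] '' K j) ≤ c := by
    intro j s hs
    apply Metric.diam_le_of_forall_dist_le hc.le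
    rintro u ⟨y1, hy1, rfl⟩ v ⟨y2, hy2, rfl⟩
    have h1 := hKG j y1 hy1 s hs
    have h2 := hKG j y2 hy2 s hs
    calc dist ((⇑f)^[s] y1) ((⇑f)^[s] y2)
        ≤ dist ((⇑f)^[s] y1) ((⇑f)^[s] (xx j)) + dist ((⇑f)^[s] (xx j)) ((⇑f)^[s] y2) :=
          dist_triangle _ _ _
      _ ≤ c / 2 + c / 2 := add_le_add h1 (by rw [dist_comm]; exact h2)
      _ = c := by ring
  -- the sequence of shifted continua and a convergent subsequence
  set LC : ℕ → TopologicalSpace.NonemptyCompacts X := fun j =>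
    ⟨⟨(⇑f)^[tt j] '' K j, (hKcomp j).image (f.continuous.iterate _)⟩,
      ⟨(⇑f)^[tt j] (xx j), Set.mem_image_of_mem _ (hxK j)⟩⟩ with hLCdef
  obtain ⟨Tlim, φ, hφmono, hφtend⟩ := CompactSpace.tendsto_subseq LC
  have hconv : ∀ ε > 0, ∃ N, ∀ i ≥ N,
      hausdorffDist ((LC (φ i)) : Set X) (Tlim : Set X) < ε := by
    intro ε hε
    obtain ⟨N, hN⟩ := Metric.tendsto_atTop.mp hφtend ε hε
    exact ⟨N, fun i hi => hN i hi⟩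
  have hLCval : ∀ j, ((LC j) : Set X) = (⇑f)^[tt j] '' K j := fun j => rfl
  -- diameter lower bound for the limit
  have hTdiam : c / 2 ≤ Metric.diam (Tlim : Set X) := by
    apply real_le_of_eps
    intro ε hε
    obtain ⟨N, hN⟩ := hconv (ε / 2) (by linarith)
    have h1 := hN N le_rfl
    have h2 := diam_le_hd (LC (φ N)).nonempty Tlim.nonempty h1
    have h3 : c / 2 ≤ Metric.diam ((⇑f)^[tt (φ N)] '' K (φ N)) :=
      le_trans (httd (φ N)) (Metric.dist_le_diam_of_mem (bddX _)
        (Set.mem_image_of_mem _ (hwK (φ N))) (Set.mem_image_of_mem _ (hxK (φ N))))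
    have h3' : c / 2 ≤ Metric.diam ((LC (φ N)) : Set X) := h3
    linarith
  -- forward diameters of the limit are bounded by `c`
  have hfor : ∀ k : ℕ, Metric.diam ((⇑f)^[k] '' (Tlim : Set X)) ≤ c := by
    intro k
    obtain ⟨δ, hδ, hsm⟩ := small_iter (⇑f) f.continuous hc k
    obtain ⟨j₀, hj₀⟩ := exists_nat_one_div_lt hδ
    have hLj : ∀ j, j₀ ≤ j → Metric.diam ((⇑f)^[k] '' ((LC j) : Set X)) ≤ c := by
      intro j hj
      have hji : (j₀ : ℝ) + 1 ≤ (j : ℝ) + 1 := by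
        have := (Nat.cast_le (α := ℝ)).mpr hj
        linarith
      have hεδ : (1 : ℝ) / (j + 1) < δ :=
        lt_of_le_of_lt (one_div_le_one_div_of_le (by positivity) hji) hj₀
      show Metric.diam ((⇑f)^[k] '' ((⇑f)^[tt j] '' K j)) ≤ c
      rw [← Set.image_comp, ← Function.iterate_add]
      by_cases hcase : k + tt j ≤ MM j
      · exact hKdiam j (k + tt j) hcase
      · have h5 := httM j
        have hexp : k + tt j = (k + tt j - MM j) + MM j := by omega
        rw [hexp, Function.iterate_add, Set.image_comp]
        refine hsm _ ?_ _ (by omega)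
        calc Metric.diam ((⇑f)^[MM j] '' K j)
            ≤ Metric.diam ((⇑f)^[MM j] '' ((Dj j).1 : Set X)) :=
              Metric.diam_mono (Set.image_mono (hKD j)) (bddX _)
          _ < 1 / (j + 1) := hDend j
          _ < δ := hεδ
    exact limit_diam_le (fun i => (LC (φ i)).nonempty) Tlim.nonempty _
      (f.continuous.iterate k) hconv
      (fun i hi => hLj (φ i) (le_trans hi hφmono.le_apply))
  -- backward diameters of the limit are bounded by `c`
  have hLI : Function.LeftInverse ⇑f.symm ⇑f := f.symm_apply_apply
  have hback : ∀ k : ℕ, Metric.diam ((⇑f.symm)^[k] '' (Tlim : Set X)) ≤ c := by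
    intro k
    obtain ⟨δ, hδ, hsm⟩ := small_iter (⇑f.symm) f.symm.continuous hc k
    obtain ⟨j₀, hj₀⟩ := exists_nat_one_div_lt hδ
    have hLj : ∀ j, j₀ ≤ j → Metric.diam ((⇑f.symm)^[k] '' ((LC j) : Set X)) ≤ c := by
      intro j hj
      have hji : (j₀ : ℝ) + 1 ≤ (j : ℝ) + 1 := by
        have := (Nat.cast_le (α := ℝ)).mpr hj
        linarith
      have hεδ : (1 : ℝ) / (j + 1) < δ :=
        lt_of_le_of_lt (one_div_le_one_div_of_le (by positivity) hji) hj₀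
      show Metric.diam ((⇑f.symm)^[k] '' ((⇑f)^[tt j] '' K j)) ≤ c
      by_cases hcase : k ≤ tt j
      · have himg : (⇑f.symm)^[k] '' ((⇑f)^[tt j] '' K j) = (⇑f)^[tt j - k] '' K j := by
          rw [← Set.image_comp]
          apply Set.image_congr'
          intro y
          show (⇑f.symm)^[k] ((⇑f)^[tt j] y) = (⇑f)^[tt j - k] y
          have h6 : (⇑f)^[tt j] y = (⇑f)^[k] ((⇑f)^[tt j - k] y) := by
            rw [← Function.iterate_add_apply]
            congr 1
            omega
          rw [h6]
          exact hLI.iterate k _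
        rw [himg]
        exact hKdiam j _ (le_trans (Nat.sub_le _ _) (httM j))
      · have himg : (⇑f.symm)^[k] '' ((⇑f)^[tt j] '' K j) = (⇑f.symm)^[k - tt j] '' K j := by
          rw [← Set.image_comp]
          apply Set.image_congr'
          intro y
          show (⇑f.symm)^[k] ((⇑f)^[tt j] y) = (⇑f.symm)^[k - tt j] y
          have hexp : k = (k - tt j) + tt j := by omega
          conv_lhs => rw [hexp]
          rw [Function.iterate_add_apply]
          exact congrArg _ (hLI.iterate (tt j) y)
        rw [himg]
        refine hsm _ ?_ _ (by omega)
        calc Metric.diam (K j) ≤ Metric.diam ((Dj j).1 : Set X) :=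
              Metric.diam_mono (hKD j) (bddX _)
          _ < 1 / (j + 1) := hDsmall j
          _ < δ := hεδ
    exact limit_diam_le (fun i => (LC (φ i)).nonempty) Tlim.nonempty _
      (f.symm.continuous.iterate k) hconv
      (fun i hi => hLj (φ i) (le_trans hi hφmono.le_apply))
  -- the limit is preconnected
  have hTconn : IsPreconnected (Tlim : Set X) := by
    apply limit_preconnected (L := fun i => ((LC (φ i)) : Set X))
      (fun i => (LC (φ i)).nonempty) ?_ Tlim.isCompact Tlim.nonempty ?_
    · intro i
      exact (hKconn (φ i)).image _ (f.continuous.iterate _).continuousOn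
    · intro ε hε
      obtain ⟨N, hN⟩ := hconv ε hε
      exact ⟨N, hN N le_rfl⟩
  -- conclusion: the limit is a nondegenerate continuum inside a dynamical ball
  have hTnontr : ∃ a ∈ (Tlim : Set X), ∃ b ∈ (Tlim : Set X), a ≠ b := by
    by_contra hcon
    push_neg at hcon
    have hsing : (Tlim : Set X).Subsingleton := fun a ha b hb => hcon a ha b hb
    have hzero := Metric.diam_subsingleton hsing
    rw [hzero] at hTdiam
    linarith
  obtain ⟨a, haT, b, hbT, hab⟩ := hTnontr
  have hsub : (Tlim : Set X) ⊆ Ws ⇑f c a ∩ Ws ⇑f.symm c a := by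
    intro y hy
    constructor
    · intro k
      exact le_trans (Metric.dist_le_diam_of_mem (bddX _)
        (Set.mem_image_of_mem _ hy) (Set.mem_image_of_mem _ haT)) (hfor k)
    · intro k
      exact le_trans (Metric.dist_le_diam_of_mem (bddX _)
        (Set.mem_image_of_mem _ hy) (Set.mem_image_of_mem _ haT)) (hback k)
  exact hab (hcw a (Tlim : Set X) hsub hTconn haT hbT)
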